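/- Let N ≥ 1 and let S_1, …, S_{N+1} be real-valued random variables on a probability space (Ω, 𝓕, μ) such that the family (S_1, …, S_{N+1}) is exchangeable. Let α ∈ (0,1), set k = ⌈(1 − α)(N + 1)⌉, and assume k ≤ N. Define the random variable q̂(ω) to be the k-th order statistic of the N values S_1(ω), …, S_N(ω). Then μ( S_{N+1} ≤ q̂ ) ≥ 1 − α. -/

import Mathlib

open MeasureTheory
open scoped ENNReal

/-- A finite family of random variables is exchangeable if its joint law is invariant
under permutations of the indices. -/
def Exchangeable {Ω E : Type*} [MeasurableSpace Ω] [MeasurableSpace E]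
    (μ : Measure Ω) {M : ℕ} (Z : Fin M → Ω → E) : Prop :=
  ∀ σ : Equiv.Perm (Fin M),
    Measure.map (fun ω => fun i => Z (σ i) ω) μ = Measure.map (fun ω => fun i => Z i ω) μ

/-- The `k`-th order statistic (1-indexed, counted with multiplicity) of the values
`s 0, …, s (m-1)`: the least `x` such that at least `k` of the values are `≤ x`. -/
noncomputable def orderStat {m : ℕ} (s : Fin m → ℝ) (k : ℕ) : ℝ :=
  sInf {x : ℝ | k ≤ (Finset.univ.filter fun i => s i ≤ x).card}

lemma orderStatSet_nonempty {m : ℕ} (s : Fin m → ℝ) {k : ℕ} (hkm : k ≤ m) :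
    {x : ℝ | k ≤ (Finset.univ.filter fun i => s i ≤ x).card}.Nonempty := by
  rcases Nat.eq_zero_or_pos m with hm | hm
  · exact ⟨0, by simp [Set.mem_setOf_eq]; omega⟩
  · have hne : (Finset.univ : Finset (Fin m)).Nonempty := by
      simpa [Finset.univ_nonempty_iff] using Fin.pos_iff_nonempty.mp hm
    refine ⟨Finset.univ.sup' hne s, ?_⟩
    have : (Finset.univ.filter fun i => s i ≤ Finset.univ.sup' hne s) = Finset.univ := by
      apply Finset.filter_true_of_mem
      intro i _
      exact Finset.le_sup' s (Finset.mem_univ i)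
    simp only [Set.mem_setOf_eq, this, Finset.card_univ, Fintype.card_fin]
    exact hkm

lemma orderStatSet_bddBelow {m : ℕ} (s : Fin m → ℝ) {k : ℕ} (hk1 : 1 ≤ k) (hkm : k ≤ m) :
    BddBelow {x : ℝ | k ≤ (Finset.univ.filter fun i => s i ≤ x).card} := by
  have hm : 0 < m := lt_of_lt_of_le hk1 hkm
  have hne : (Finset.univ : Finset (Fin m)).Nonempty := by
    simpa [Finset.univ_nonempty_iff] using Fin.pos_iff_nonempty.mp hm
  refine ⟨Finset.univ.inf' hne s, ?_⟩
  intro x hx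
  simp only [Set.mem_setOf_eq] at hx
  have hfne : (Finset.univ.filter fun i => s i ≤ x).Nonempty := by
    rw [← Finset.card_pos]; omega
  obtain ⟨i, hi⟩ := hfne
  simp only [Finset.mem_filter] at hi
  exact le_trans (Finset.inf'_le s (Finset.mem_univ i)) hi.2

lemma orderStat_mem {m : ℕ} (s : Fin m → ℝ) {k : ℕ} (hkm : k ≤ m) :
    k ≤ (Finset.univ.filter fun i => s i ≤ orderStat s k).card := by
  set a := orderStat s k with ha
  by_contra hcon
  push_neg at hcon
  set t := Finset.univ.filter (fun i => a < s i) with ht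
  have htne : t.Nonempty := by
    by_contra hte
    rw [Finset.not_nonempty_iff_eq_empty, Finset.filter_eq_empty_iff] at hte
    have : (Finset.univ.filter fun i => s i ≤ a) = Finset.univ := by
      apply Finset.filter_true_of_mem
      intro i _
      have := hte (Finset.mem_univ i)
      linarith [not_lt.mp this]
    rw [this] at hcon
    simp [Finset.card_univ] at hcon
    omega
  set b := t.inf' htne s with hb
  have hab : a < b := by
    rw [hb]
    rw [Finset.lt_inf'_iff htne]
    intro i hi
    exact (Finset.mem_filter.mp hi).2
  have hlb : b ≤ a := by
    apply le_csInf (orderStatSet_nonempty s hkm)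
    intro x hx
    simp only [Set.mem_setOf_eq] at hx
    by_contra hxb
    push_neg at hxb
    have hsub : (Finset.univ.filter fun i => s i ≤ x) ⊆ (Finset.univ.filter fun i => s i ≤ a) := by
      intro i hi
      simp only [Finset.mem_filter, Finset.mem_univ, true_and] at hi ⊢
      by_contra hia
      push_neg at hia
      have : i ∈ t := Finset.mem_filter.mpr ⟨Finset.mem_univ i, hia⟩
      have := Finset.inf'_le s this
      linarith
    have := Finset.card_le_card hsub
    omega
  linarith

lemma orderStat_le_iff {m : ℕ} (s : Fin m → ℝ) {k : ℕ} (hk1 : 1 ≤ k) (hkm : k ≤ m) (x : ℝ) :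
    orderStat s k ≤ x ↔ k ≤ (Finset.univ.filter fun i => s i ≤ x).card := by
  constructor
  · intro h
    refine le_trans (orderStat_mem s hkm) (Finset.card_le_card ?_)
    intro i hi
    simp only [Finset.mem_filter, Finset.mem_univ, true_and] at hi ⊢
    linarith
  · intro h
    exact csInf_le (orderStatSet_bddBelow s hk1 hkm) h

lemma orderStat_restrict {N : ℕ} (s : Fin (N + 1) → ℝ) {k : ℕ} (hk1 : 1 ≤ k) (hkN : k ≤ N) :
    orderStat s k ≤ orderStat (fun i : Fin N => s i.castSucc) k := by
  apply csInf_le_csInf (orderStatSet_bddBelow s hk1 (by omega))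
    (orderStatSet_nonempty _ hkN)
  intro x hx
  simp only [Set.mem_setOf_eq] at hx ⊢
  refine le_trans hx (Finset.card_le_card_of_injOn (fun i => Fin.castSucc i) ?_ ?_)
  · intro i hi
    simp only [Finset.mem_coe, Finset.mem_filter, Finset.mem_univ, true_and] at hi ⊢
    exact hi
  · exact fun a _ b _ h => Fin.castSucc_injective N h

lemma orderStat_perm {m : ℕ} (s : Fin m → ℝ) (σ : Equiv.Perm (Fin m)) (k : ℕ) :
    orderStat (fun i => s (σ i)) k = orderStat s k := by
  unfold orderStat
  congr 1
  ext x
  simp only [Set.mem_setOf_eq]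
  have : (Finset.univ.filter fun i => s (σ i) ≤ x).card
      = (Finset.univ.filter fun i => s i ≤ x).card := by
    apply Finset.card_bij (fun i _ => σ i)
    · intro i hi; simp only [Finset.mem_filter, Finset.mem_univ, true_and] at hi ⊢; exact hi
    · intro a _ b _ h; exact σ.injective h
    · intro b hb
      refine ⟨σ.symm b, ?_, by simp⟩
      simp only [Finset.mem_filter, Finset.mem_univ, true_and, Equiv.apply_symm_apply] at hb ⊢
      exact hb
  rw [this]

lemma measurable_card_filter {m : ℕ} (x : ℝ) :
    Measurable (fun s : Fin m → ℝ => (Finset.univ.filter fun i => s i ≤ x).card) := by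
  have : (fun s : Fin m → ℝ => (Finset.univ.filter fun i => s i ≤ x).card)
      = fun s => ∑ i : Fin m, if s i ≤ x then 1 else 0 := by
    funext s
    rw [Finset.sum_boole]
    simp
  rw [this]
  apply Finset.measurable_sum
  intro i _
  exact Measurable.ite (measurableSet_le (measurable_pi_apply i) measurable_const)
    measurable_const measurable_const

lemma measurable_orderStat {m : ℕ} {k : ℕ} (hk1 : 1 ≤ k) (hkm : k ≤ m) :
    Measurable (fun s : Fin m → ℝ => orderStat s k) := by
  apply measurable_of_Iic
  intro x
  have : (fun s : Fin m → ℝ => orderStat s k) ⁻¹' Set.Iic x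
      = {s : Fin m → ℝ | k ≤ (Finset.univ.filter fun i => s i ≤ x).card} := by
    ext s
    simp only [Set.mem_preimage, Set.mem_Iic, Set.mem_setOf_eq]
    exact orderStat_le_iff s hk1 hkm x
  rw [this]
  exact measurableSet_le measurable_const (measurable_card_filter x)

/-- Marginal coverage guarantee of split conformal prediction: for exchangeable scores
`S 1, …, S (N+1)`, the last score is at most the `⌈(1-α)(N+1)⌉`-th order statistic of the
first `N` scores with probability at least `1 - α`. -/
theorem conformal_marginal_coverage
    {Ω : Type*} [MeasurableSpace Ω] (μ : Measure Ω) [IsProbabilityMeasure μ]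
    (N : ℕ) (hN : 1 ≤ N)
    (S : Fin (N + 1) → Ω → ℝ) (hSmeas : ∀ i, Measurable (S i))
    (hexch : Exchangeable μ S)
    (α : ℝ) (hα0 : 0 < α) (hα1 : α < 1)
    (k : ℕ) (hk : k = ⌈(1 - α) * (N + 1 : ℝ)⌉₊) (hkN : k ≤ N) :
    ENNReal.ofReal (1 - α) ≤
      μ {ω | S (Fin.last N) ω ≤ orderStat (fun i : Fin N => S i.castSucc ω) k} := by
  have hkr : (1 - α) * (N + 1 : ℝ) ≤ (k : ℝ) := hk ▸ Nat.le_ceil _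
  have hpos : (0 : ℝ) < (1 - α) * (N + 1 : ℝ) := by
    apply mul_pos (by linarith); positivity
  have hk1 : 1 ≤ k := by
    rw [hk]; exact Nat.ceil_pos.mpr hpos
  have hkm : k ≤ N + 1 := by omega
  -- the joint map
  set J : Ω → (Fin (N + 1) → ℝ) := fun ω i => S i ω with hJ
  have hJm : Measurable J := measurable_pi_lambda _ (fun i => hSmeas i)
  -- events
  set B : Fin (N + 1) → Set (Fin (N + 1) → ℝ) :=
    fun i => {v | v i ≤ orderStat v k} with hB
  have hBm : ∀ i, MeasurableSet (B i) := fun i =>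
    measurableSet_le (measurable_pi_apply i) (measurable_orderStat hk1 hkm)
  -- equal probabilities via exchangeability
  have hexch_eq : ∀ i : Fin (N + 1), μ (J ⁻¹' B i) = μ (J ⁻¹' B (Fin.last N)) := by
    intro i
    set σ := Equiv.swap i (Fin.last N) with hσ
    have hperm := hexch σ
    have hcomp : (fun ω => fun j => S (σ j) ω) = (fun v : Fin (N+1) → ℝ => v ∘ σ) ∘ J := rfl
    have hgm : Measurable (fun v : Fin (N+1) → ℝ => v ∘ σ) :=
      measurable_pi_lambda _ (fun j => measurable_pi_apply (σ j))
    have hmap : Measure.map (fun v : Fin (N+1) → ℝ => v ∘ σ) (Measure.map J μ)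
        = Measure.map J μ := by
      rw [Measure.map_map hgm hJm, ← hcomp, hperm]
    have hpre : (fun v : Fin (N+1) → ℝ => v ∘ σ) ⁻¹' B (Fin.last N) = B i := by
      ext v
      simp only [Set.mem_preimage, hB, Set.mem_setOf_eq, Function.comp]
      rw [show (v ∘ ⇑σ) = fun j => v (σ j) from rfl, orderStat_perm v σ k, hσ,
        Equiv.swap_apply_right]
    calc μ (J ⁻¹' B i) = Measure.map J μ (B i) := (Measure.map_apply hJm (hBm i)).symm
      _ = Measure.map J μ ((fun v : Fin (N+1) → ℝ => v ∘ σ) ⁻¹' B (Fin.last N)) := by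
          rw [hpre]
      _ = Measure.map (fun v : Fin (N+1) → ℝ => v ∘ σ) (Measure.map J μ) (B (Fin.last N)) :=
          (Measure.map_apply hgm (hBm (Fin.last N))).symm
      _ = Measure.map J μ (B (Fin.last N)) := by rw [hmap]
      _ = μ (J ⁻¹' B (Fin.last N)) := Measure.map_apply hJm (hBm (Fin.last N))
  -- counting bound: k ≤ ∑ μ (J⁻¹' B i)
  have hEm : ∀ i, MeasurableSet (J ⁻¹' B i) := fun i => hJm (hBm i)
  have hsum : (k : ℝ≥0∞) ≤ ∑ i : Fin (N + 1), μ (J ⁻¹' B i) := by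
    have h1 : ∀ i, μ (J ⁻¹' B i) = ∫⁻ ω, Set.indicator (J ⁻¹' B i) (fun _ => 1) ω ∂μ := by
      intro i
      rw [lintegral_indicator (hEm i)]
      simp
    calc (k : ℝ≥0∞) = ∫⁻ _, (k : ℝ≥0∞) ∂μ := by simp
      _ ≤ ∫⁻ ω, ∑ i : Fin (N + 1), Set.indicator (J ⁻¹' B i) (fun _ => 1) ω ∂μ := by
          apply lintegral_mono
          intro ω
          show (k : ℝ≥0∞) ≤ ∑ i : Fin (N + 1), Set.indicator (J ⁻¹' B i) (fun _ => 1) ω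
          have hcard := orderStat_mem (J ω) (k := k) (by omega)
          have heq : ∑ i : Fin (N + 1), Set.indicator (J ⁻¹' B i) (fun _ => (1:ℝ≥0∞)) ω
              = ((Finset.univ.filter fun i => J ω i ≤ orderStat (J ω) k).card : ℝ≥0∞) := by
            rw [← Finset.sum_boole]
            refine Finset.sum_congr rfl fun i _ => ?_
            simp [Set.indicator_apply, Set.mem_preimage, hB, Set.mem_setOf_eq]
          rw [heq]
          exact Nat.cast_le.mpr hcard
      _ = ∑ i : Fin (N + 1), ∫⁻ ω, Set.indicator (J ⁻¹' B i) (fun _ => 1) ω ∂μ := by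
          rw [lintegral_finset_sum]
          intro i _
          exact (measurable_const.indicator (hEm i))
      _ = ∑ i : Fin (N + 1), μ (J ⁻¹' B i) := by
          exact Finset.sum_congr rfl (fun i _ => (h1 i).symm)
  -- so k ≤ (N+1) * μ (last event)
  have hsum' : (k : ℝ≥0∞) ≤ (N + 1 : ℕ) * μ (J ⁻¹' B (Fin.last N)) := by
    refine le_trans hsum ?_
    rw [Finset.sum_congr rfl (fun i _ => hexch_eq i), Finset.sum_const, Finset.card_univ,
      Fintype.card_fin, nsmul_eq_mul]
  -- final event inclusion
  have hincl : J ⁻¹' B (Fin.last N) ⊆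
      {ω | S (Fin.last N) ω ≤ orderStat (fun i : Fin N => S i.castSucc ω) k} := by
    intro ω hω
    simp only [Set.mem_preimage, hB, Set.mem_setOf_eq] at hω ⊢
    exact le_trans hω (orderStat_restrict (J ω) hk1 hkN)
  refine le_trans ?_ (measure_mono hincl)
  -- arithmetic: ofReal (1-α) ≤ μ (...)
  have hNne : ((N + 1 : ℕ) : ℝ≥0∞) ≠ 0 := by simp
  have hNnt : ((N + 1 : ℕ) : ℝ≥0∞) ≠ ⊤ := by simp
  rw [← ENNReal.mul_le_mul_iff_right (a := ((N + 1 : ℕ) : ℝ≥0∞)) hNne hNnt]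
  calc ((N + 1 : ℕ) : ℝ≥0∞) * ENNReal.ofReal (1 - α)
      = ENNReal.ofReal (((N + 1 : ℕ) : ℝ) * (1 - α)) := by
        rw [← ENNReal.ofReal_natCast, ← ENNReal.ofReal_mul (by positivity)]
    _ ≤ ENNReal.ofReal (k : ℝ) := by
        apply ENNReal.ofReal_le_ofReal
        push_cast
        push_cast at hkr
        linarith
    _ = (k : ℝ≥0∞) := ENNReal.ofReal_natCast k
    _ ≤ ((N + 1 : ℕ) : ℝ≥0∞) * μ (J ⁻¹' B (Fin.last N)) := hsum'
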